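/- Let M be a traceless anti-Hermitian matrix in ℂ^{d×d} (i.e., M† = -M, Tr M = 0). Then iM is a traceless Hermitian matrix, and consequently there exists an orthonormal basis {u_i} of ℂ^d with ⟨u_i|M|u_i⟩ = 0 for all i. -/

import Mathlib

open Matrix

private lemma sumSmul_dotProduct {d : ℕ} (c : Fin d → ℂ) (f : Fin d → Fin d → ℂ)
    (x : Fin d → ℂ) : (∑ a, c a • f a) ⬝ᵥ x = ∑ a, c a * (f a ⬝ᵥ x) := by
  simp only [dotProduct, Finset.sum_apply, Pi.smul_apply, smul_eq_mul,
    Finset.sum_mul, Finset.mul_sum]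
  rw [Finset.sum_comm]
  exact Finset.sum_congr rfl fun _ _ => Finset.sum_congr rfl fun _ _ => mul_assoc _ _ _

private lemma dotProduct_sumSmul {d : ℕ} (c : Fin d → ℂ) (f : Fin d → Fin d → ℂ)
    (x : Fin d → ℂ) : x ⬝ᵥ (∑ a, c a • f a) = ∑ a, c a * (x ⬝ᵥ f a) := by
  simp only [dotProduct, Finset.sum_apply, Pi.smul_apply, smul_eq_mul,
    Finset.sum_mul, Finset.mul_sum]
  rw [Finset.sum_comm]
  exact Finset.sum_congr rfl fun _ _ => Finset.sum_congr rfl fun _ _ => by ring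

private lemma mulVec_sumSmul {d : ℕ} (B : Matrix (Fin d) (Fin d) ℂ) (c : Fin d → ℂ)
    (f : Fin d → Fin d → ℂ) :
    B *ᵥ (∑ a, c a • f a) = ∑ a, c a • (B *ᵥ f a) := by
  funext x
  simp only [Matrix.mulVec, Finset.sum_apply, Pi.smul_apply, smul_eq_mul]
  rw [dotProduct_sumSmul]

/-- For a traceless anti-Hermitian `M`, the matrix `iM` is traceless Hermitian,
and consequently there is an orthonormal basis `{u_i}` with `⟨u_i|M|u_i⟩ = 0`. -/
theorem antiHermitian_zero_diag (d : ℕ) (M : Matrix (Fin d) (Fin d) ℂ)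
    (hM : Mᴴ = -M) (hT : M.trace = 0) :
    (Complex.I • M).IsHermitian ∧ (Complex.I • M).trace = 0 ∧
    ∃ u : Fin d → (Fin d → ℂ),
      (∀ i j, star (u i) ⬝ᵥ u j = if i = j then 1 else 0) ∧
      (∀ i, star (u i) ⬝ᵥ M.mulVec (u i) = 0) := by
  have hH : (Complex.I • M).IsHermitian := by
    show ((Complex.I • M)ᴴ = _)
    rw [conjTranspose_smul, hM]
    simp [Complex.star_def, Complex.conj_I]
  have hTr : (Complex.I • M).trace = 0 := by rw [trace_smul, hT, smul_zero]
  refine ⟨hH, hTr, ?_⟩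
  rcases Nat.eq_zero_or_pos d with hd | hd
  · subst hd
    exact ⟨fun _ => 0, fun i => i.elim0, fun i => i.elim0⟩
  -- setup
  have hdC : (d : ℂ) ≠ 0 := Nat.cast_ne_zero.mpr hd.ne'
  set v : Fin d → (Fin d → ℂ) := fun j => ⇑(hH.eigenvectorBasis j) with hv
  set lam : Fin d → ℝ := hH.eigenvalues with hlam
  have hv_on : ∀ a b, star (v a) ⬝ᵥ v b = if a = b then 1 else 0 := by
    intro a b
    have h := orthonormal_iff_ite.mp hH.eigenvectorBasis.orthonormal a b
    rw [EuclideanSpace.inner_eq_star_dotProduct, dotProduct_comm] at h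
    simpa using h
  have hMv : ∀ b, M *ᵥ v b = ((-Complex.I) * (lam b : ℂ)) • v b := by
    intro b
    have h1 : (Complex.I • M) *ᵥ v b = ((lam b : ℝ)) • v b := hH.mulVec_eigenvectorBasis b
    rw [smul_mulVec] at h1
    have h2 : (-Complex.I) • ((Complex.I : ℂ) • (M *ᵥ v b)) = (-Complex.I) • ((lam b : ℝ) • v b) :=
      by rw [h1]
    rw [smul_smul] at h2
    simp only [neg_mul, Complex.I_mul_I, neg_neg, one_smul] at h2
    rw [h2]
    funext x
    simp only [Pi.smul_apply, smul_eq_mul, Complex.real_smul]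
    ring
  have hMdiag : ∀ a b, star (v a) ⬝ᵥ (M *ᵥ v b) =
      if a = b then (-Complex.I) * (lam b : ℂ) else 0 := by
    intro a b
    rw [hMv b, dotProduct_smul, smul_eq_mul, hv_on a b]
    split <;> simp
  -- sum of eigenvalues is the trace, hence zero
  have hsum : (∑ a, (lam a : ℂ)) = 0 := by
    have hst := hH.spectral_theorem
    have h1 : (Complex.I • M).trace
        = (diagonal (RCLike.ofReal ∘ lam) : Matrix (Fin d) (Fin d) ℂ).trace := by
      conv_lhs => rw [hst, Unitary.conjStarAlgAut_apply]
      rw [trace_mul_cycle]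
      have : (star (hH.eigenvectorUnitary : Matrix (Fin d) (Fin d) ℂ)) *
          (hH.eigenvectorUnitary : Matrix (Fin d) (Fin d) ℂ) = 1 :=
        Unitary.coe_star_mul_self hH.eigenvectorUnitary
      rw [this, one_mul]
    rw [hTr] at h1
    rw [← h1.symm] at *
    simpa [trace_diagonal] using h1.symm
  -- the primitive root
  set ζ : ℂ := Complex.exp (2 * Real.pi * Complex.I / d) with hζdef
  have hζ : IsPrimitiveRoot ζ d := Complex.isPrimitiveRoot_exp d hd.ne'
  have hζne : ζ ≠ 0 := Complex.exp_ne_zero _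
  have habs : ‖ζ‖ = 1 := by
    rw [hζdef, show (2 * Real.pi * Complex.I / d) = ((2 * Real.pi / d : ℝ) : ℂ) * Complex.I by
      push_cast; ring]
    exact Complex.norm_exp_ofReal_mul_I _
  have hconj : (starRingEnd ℂ) ζ = ζ⁻¹ := (Complex.inv_eq_conj habs).symm
  have hone : ∀ n : ℕ, (starRingEnd ℂ) (ζ ^ n) * ζ ^ n = 1 := by
    intro n
    rw [map_pow, hconj, inv_pow, inv_mul_cancel₀ (pow_ne_zero n hζne)]
  -- root-of-unity sums
  have hterm : ∀ (i j a : Fin d),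
      (starRingEnd ℂ) (ζ ^ (a.val * i.val)) * ζ ^ (a.val * j.val)
        = (ζ ^ ((j.val : ℤ) - (i.val : ℤ))) ^ a.val := by
    intro i j a
    rw [map_pow, hconj, inv_pow, ← zpow_natCast ζ (a.val * i.val),
      ← zpow_natCast ζ (a.val * j.val), ← _root_.zpow_neg, ← zpow_add₀ hζne,
      ← zpow_natCast (ζ ^ ((j.val : ℤ) - (i.val : ℤ))), ← _root_.zpow_mul]
    congr 1
    push_cast
    ring
  have hroot : ∀ i j : Fin d,
      (∑ a : Fin d, (starRingEnd ℂ) (ζ ^ (a.val * i.val)) * ζ ^ (a.val * j.val))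
        = if i = j then (d : ℂ) else 0 := by
    intro i j
    have hrw : (∑ a : Fin d, (starRingEnd ℂ) (ζ ^ (a.val * i.val)) * ζ ^ (a.val * j.val))
        = ∑ k ∈ Finset.range d, (ζ ^ ((j.val : ℤ) - (i.val : ℤ))) ^ k := by
      rw [← Fin.sum_univ_eq_sum_range]
      exact Finset.sum_congr rfl fun a _ => hterm i j a
    rw [hrw]
    by_cases hij : i = j
    · subst hij
      simp
    · rw [if_neg hij]
      set w : ℂ := ζ ^ ((j.val : ℤ) - (i.val : ℤ)) with hw
      have hwne : w ≠ 1 := by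
        intro h1
        have hdvd : (d : ℤ) ∣ ((j.val : ℤ) - (i.val : ℤ)) := (hζ.zpow_eq_one_iff_dvd _).mp h1
        have hne0 : ((j.val : ℤ) - (i.val : ℤ)) ≠ 0 := by
          intro h0
          exact hij (Fin.ext (by omega))
        have hle := Int.le_of_dvd (abs_pos.mpr hne0) ((dvd_abs _ _).mpr hdvd)
        have hlt : |((j.val : ℤ) - (i.val : ℤ))| < d := by
          rw [abs_lt]
          have := i.isLt; have := j.isLt
          omega
        omega
      have hwd : w ^ d = 1 := by
        rw [hw, ← zpow_natCast (ζ ^ ((j.val : ℤ) - (i.val : ℤ))), ← _root_.zpow_mul, mul_comm,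
          _root_.zpow_mul, zpow_natCast, hζ.pow_eq_one, _root_.one_zpow]
      rw [geom_sum_eq hwne, hwd, sub_self, zero_div]
  -- the basis
  set s : ℝ := Real.sqrt d with hs
  have hsne : (s : ℂ) ≠ 0 := by
    simp only [ne_eq, Complex.ofReal_eq_zero, hs]
    positivity
  have hss : ((s : ℂ))⁻¹ * ((s : ℂ))⁻¹ = (d : ℂ)⁻¹ := by
    rw [← mul_inv]
    congr 1
    rw [← Complex.ofReal_mul, Real.mul_self_sqrt (Nat.cast_nonneg d)]
    simp
  set u : Fin d → (Fin d → ℂ) :=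
    fun k => ((s : ℂ))⁻¹ • ∑ a, ζ ^ (a.val * k.val) • v a with hu
  have hstar : ∀ i, star (u i)
      = ((s : ℂ))⁻¹ • ∑ a, (starRingEnd ℂ) (ζ ^ (a.val * i.val)) • star (v a) := by
    intro i
    rw [hu]
    rw [star_smul, star_sum]
    simp only [star_smul, Complex.star_def, map_inv₀, Complex.conj_ofReal]
  have key : ∀ (B : Matrix (Fin d) (Fin d) ℂ) (w : Fin d → ℂ),
      (∀ a b, star (v a) ⬝ᵥ (B *ᵥ v b) = if a = b then w b else 0) →
      ∀ i j, star (u i) ⬝ᵥ (B *ᵥ u j)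
        = (d : ℂ)⁻¹ * ∑ a, (starRingEnd ℂ) (ζ ^ (a.val * i.val)) * ζ ^ (a.val * j.val) * w a := by
    intro B w hB i j
    rw [hstar i, hu]
    simp only
    rw [mulVec_smul, mulVec_sumSmul, smul_dotProduct, dotProduct_smul, sumSmul_dotProduct]
    rw [show (∑ a, (starRingEnd ℂ) (ζ ^ (a.val * i.val))
        * ((star (v a)) ⬝ᵥ (∑ b, ζ ^ (b.val * j.val) • (B *ᵥ v b))))
        = ∑ a, (starRingEnd ℂ) (ζ ^ (a.val * i.val)) * ζ ^ (a.val * j.val) * w a from ?_]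
    · rw [smul_eq_mul, smul_eq_mul, ← mul_assoc, hss]
    · refine Finset.sum_congr rfl fun a _ => ?_
      rw [dotProduct_sumSmul]
      rw [show (∑ b, ζ ^ (b.val * j.val) * ((star (v a)) ⬝ᵥ (B *ᵥ v b)))
          = ζ ^ (a.val * j.val) * w a from ?_]
      · ring
      · rw [Finset.sum_congr rfl fun b _ => by rw [hB a b]]
        simp [Finset.mul_sum, mul_ite]
  refine ⟨u, ?_, ?_⟩
  · intro i j
    have h := key 1 (fun _ => 1) (fun a b => by rw [one_mulVec]; exact hv_on a b) i j
    rw [one_mulVec] at h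
    rw [h]
    simp only [mul_one]
    rw [hroot i j]
    split
    · exact inv_mul_cancel₀ hdC
    · exact mul_zero _
  · intro i
    have h := key M (fun b => (-Complex.I) * (lam b : ℂ)) hMdiag i i
    rw [h]
    have : (∑ a, (starRingEnd ℂ) (ζ ^ (a.val * i.val)) * ζ ^ (a.val * i.val)
        * ((-Complex.I) * (lam a : ℂ))) = (-Complex.I) * ∑ a, (lam a : ℂ) := by
      rw [Finset.mul_sum]
      exact Finset.sum_congr rfl fun a _ => by rw [hone]; ring
    rw [this, hsum, mul_zero, mul_zero]
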